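/- Let P(x) = 1 + (25/8)·x·(x+1)·(3x² + 3x + 2) ∈ ℚ[x] (the Hilbert polynomial of a Wilson fourfold). Then the 5×5 matrix with entries P(j − i) for 0 ≤ i, j ≤ 4 has determinant 225⁵ = 15¹⁰. -/

import Mathlib

/-- Let `P(x) = 1 + (25/8)·x·(x+1)·(3x² + 3x + 2) ∈ ℚ[x]`
(the Hilbert polynomial of a Wilson fourfold). Then the `5×5` matrix with entries
`P(j - i)` for `0 ≤ i, j ≤ 4` has determinant `225⁵ = 15¹⁰`. -/
theorem stmt_4 (P : Polynomial ℚ)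
    (hP : P = 1 + Polynomial.C ((25 : ℚ) / 8) * Polynomial.X * (Polynomial.X + 1) *
      (3 * Polynomial.X ^ 2 + 3 * Polynomial.X + 2))
    (A : Matrix (Fin 5) (Fin 5) ℚ)
    (hA : ∀ i j : Fin 5, A i j = P.eval (((j : ℤ) - (i : ℤ) : ℤ) : ℚ)) :
    A.det = 225 ^ 5 ∧ A.det = 15 ^ 10 := by
  have hAeq : A = !![1,51,376,1426,3876; 1,1,51,376,1426; 51,1,1,51,376;
      376,51,1,1,51; 1426,376,51,1,1] := by
    ext i j
    fin_cases i <;> fin_cases j <;>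
      simp [hA, hP, show ((0:Fin 5):ℕ) = 0 from rfl, show ((1:Fin 5):ℕ) = 1 from rfl,
        show ((2:Fin 5):ℕ) = 2 from rfl, show ((3:Fin 5):ℕ) = 3 from rfl,
        show ((4:Fin 5):ℕ) = 4 from rfl, Matrix.vecHead, Matrix.vecTail] <;> norm_num
  have hdet : A.det = 225 ^ 5 := by
    rw [hAeq]
    simp [Matrix.det_succ_row_zero, Fin.sum_univ_succ, Fin.succAbove,
      show ((2:Fin 4).castSucc = 2) from rfl, show ((2:Fin 3).castSucc = 2) from rfl,
      show (((2:Fin 3).castSucc).castSucc = (2:Fin 5)) from rfl,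
      show (((2:Fin 3).succ).castSucc = (3:Fin 5)) from rfl,
      show (((2:Fin 4).castSucc).castSucc = (2:Fin 6)) from rfl]
    norm_num
  exact ⟨hdet, by rw [hdet]; norm_num⟩
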